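/- Let H be a real inner product space, let v, w ∈ H with v ≠ w, and let δ ∈ (0,1], R > 0, G > 0 be real constants such that ⟨v, w⟩ ≤ −δR‖v‖ and ‖w‖ ≤ G. Then (‖v‖²·‖w‖² − ⟨v,w⟩²) / ‖v−w‖² ≤ (1 − δ²R²/G²)·‖v‖². -/

import Mathlib

open scoped RealInnerProductSpace

/-- One exact line-search Frank–Wolfe step with a δ-approximate LMO contracts the
squared residual by the factor `1 − δ²R²/G²`. -/
theorem stmt_1 {H : Type*} [NormedAddCommGroup H] [InnerProductSpace ℝ H]
    (v w : H) (hvw : v ≠ w) (δ R G : ℝ)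
    (hδ : δ ∈ Set.Ioc (0 : ℝ) 1) (hR : 0 < R) (hG : 0 < G)
    (hor : ⟪v, w⟫ ≤ -(δ * R * ‖v‖)) (hwG : ‖w‖ ≤ G) :
    (‖v‖ ^ 2 * ‖w‖ ^ 2 - ⟪v, w⟫ ^ 2) / ‖v - w‖ ^ 2
      ≤ (1 - δ ^ 2 * R ^ 2 / G ^ 2) * ‖v‖ ^ 2 := by
  obtain ⟨hδ0, hδ1⟩ := hδ
  have ht : 0 ≤ δ * R * ‖v‖ := by positivity
  have hc0 : ⟪v, w⟫ ≤ 0 := hor.trans (by linarith)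
  -- c² ≥ (δR‖v‖)²
  have hc2 : (δ * R * ‖v‖) ^ 2 ≤ ⟪v, w⟫ ^ 2 := by nlinarith
  -- w ≠ 0
  have hw0 : w ≠ 0 := by
    intro h
    have : ⟪v, w⟫ = 0 := by simp [h]
    have hv0 : ‖v‖ ≤ 0 := by
      by_contra hv
      push_neg at hv
      nlinarith [mul_pos (mul_pos hδ0 hR) hv]
    have : v = 0 := by simpa using le_antisymm hv0 (norm_nonneg v)
    exact hvw (by simp [this, h])
  have hwpos : 0 < ‖w‖ := norm_pos_iff.2 hw0
  have hvwpos : 0 < ‖v - w‖ := norm_pos_iff.2 (sub_ne_zero.2 hvw)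
  have hcs : ⟪v, w⟫ ^ 2 ≤ ‖v‖ ^ 2 * ‖w‖ ^ 2 := by
    have := abs_real_inner_le_norm v w
    nlinarith [abs_nonneg ⟪v, w⟫, sq_abs ⟪v, w⟫]
  have hnorm : ‖v - w‖ ^ 2 = ‖v‖ ^ 2 - 2 * ⟪v, w⟫ + ‖w‖ ^ 2 := by
    rw [@norm_sub_sq_real]
  have hge : ‖w‖ ^ 2 ≤ ‖v - w‖ ^ 2 := by nlinarith [sq_nonneg ‖v‖]
  have key : δ ^ 2 * R ^ 2 / G ^ 2 * (‖v‖ ^ 2 * ‖w‖ ^ 2) ≤ ⟪v, w⟫ ^ 2 := by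
    have hb2G : ‖w‖ ^ 2 ≤ G ^ 2 := by nlinarith [norm_nonneg w]
    rw [div_mul_eq_mul_div, div_le_iff₀ (by positivity)]
    nlinarith [mul_le_mul_of_nonneg_right hc2 (sq_nonneg ‖w‖),
      mul_le_mul_of_nonneg_left hb2G (sq_nonneg ⟪v, w⟫)]
  calc (‖v‖ ^ 2 * ‖w‖ ^ 2 - ⟪v, w⟫ ^ 2) / ‖v - w‖ ^ 2
      ≤ (‖v‖ ^ 2 * ‖w‖ ^ 2 - ⟪v, w⟫ ^ 2) / ‖w‖ ^ 2 := by
        gcongr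
    _ ≤ (1 - δ ^ 2 * R ^ 2 / G ^ 2) * ‖v‖ ^ 2 := by
        rw [div_le_iff₀ (by positivity)]
        nlinarith [key]
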